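/- arXiv:2212.10424 — 5 statements merged into one kernel-verified Lean document; each statement's English description precedes it below -/
import Mathlib

section
/- Let N ≥ 1 and let Q₁₁, Q₁₂, Q₂₂, L₁, L₂ be real N×N diagonal matrices. Suppose the 2N×2N block matrix Q = [[Q₁₁, Q₁₂], [Q₁₂, Q₂₂]] is symmetric positive definite, Q₁₂ is negative definite, and L₁ and L₂ are positive definite. Write Q⁻¹ = [[P₁₁, P₁₂], [P₁₂ᵀ, P₂₂]] in N×N blocks and define K₁ = L₁P₁₁ + L₂P₁₂ᵀ and K₂ = L₁P₁₂ + L₂P₂₂ (so that [K₁ K₂] = [L₁ L₂]·Q⁻¹). Then K₁ and K₂ are diagonal positive definite matrices. -/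
open Matrix

/-- Lemma 1 of the paper: the feedback gains `K₁, K₂` obtained from a solution of the
sparse LMI are diagonal positive definite matrices. -/
theorem stmt_0 {N : ℕ} (hN : 1 ≤ N)
    (Q₁₁ Q₁₂ Q₂₂ L₁ L₂ : Matrix (Fin N) (Fin N) ℝ)
    (hQ₁₁d : Q₁₁.IsDiag) (hQ₁₂d : Q₁₂.IsDiag) (hQ₂₂d : Q₂₂.IsDiag)
    (hL₁d : L₁.IsDiag) (hL₂d : L₂.IsDiag)
    (hQ : (Matrix.fromBlocks Q₁₁ Q₁₂ Q₁₂ Q₂₂).PosDef)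
    (hQ₁₂ : (-Q₁₂).PosDef) (hL₁ : L₁.PosDef) (hL₂ : L₂.PosDef)
    (P₁₁ P₁₂ P₂₂ K₁ K₂ : Matrix (Fin N) (Fin N) ℝ)
    (hP₁₁ : P₁₁ = (Matrix.fromBlocks Q₁₁ Q₁₂ Q₁₂ Q₂₂)⁻¹.toBlocks₁₁)
    (hP₁₂ : P₁₂ = (Matrix.fromBlocks Q₁₁ Q₁₂ Q₁₂ Q₂₂)⁻¹.toBlocks₁₂)
    (hP₂₂ : P₂₂ = (Matrix.fromBlocks Q₁₁ Q₁₂ Q₁₂ Q₂₂)⁻¹.toBlocks₂₂)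
    (hK₁ : K₁ = L₁ * P₁₁ + L₂ * P₁₂ᵀ)
    (hK₂ : K₂ = L₁ * P₁₂ + L₂ * P₂₂) :
    K₁.IsDiag ∧ K₁.PosDef ∧ K₂.IsDiag ∧ K₂.PosDef := by
  -- name the diagonal entries
  set q11 : Fin N → ℝ := Q₁₁.diag with hq11
  set q12 : Fin N → ℝ := Q₁₂.diag with hq12
  set q22 : Fin N → ℝ := Q₂₂.diag with hq22
  set l1 : Fin N → ℝ := L₁.diag with hl1
  set l2 : Fin N → ℝ := L₂.diag with hl2
  have h11 : Q₁₁ = diagonal q11 := (hQ₁₁d.diagonal_diag).symm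
  have h12 : Q₁₂ = diagonal q12 := (hQ₁₂d.diagonal_diag).symm
  have h22 : Q₂₂ = diagonal q22 := (hQ₂₂d.diagonal_diag).symm
  have hL1 : L₁ = diagonal l1 := (hL₁d.diagonal_diag).symm
  have hL2 : L₂ = diagonal l2 := (hL₂d.diagonal_diag).symm
  -- positivity of diagonal entries
  have hl1pos : ∀ i, 0 < l1 i := by
    rw [hL1] at hL₁; exact (posDef_diagonal_iff).mp hL₁
  have hl2pos : ∀ i, 0 < l2 i := by
    rw [hL2] at hL₂; exact (posDef_diagonal_iff).mp hL₂
  have hq12neg : ∀ i, 0 < -q12 i := by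
    have : (-Q₁₂) = diagonal (fun i => -q12 i) := by
      rw [h12]; ext i j; by_cases h : i = j <;> simp [diagonal, h]
    rw [this] at hQ₁₂
    exact (posDef_diagonal_iff).mp hQ₁₂
  -- the scalar quadratic form is positive definite at each index
  have key : ∀ (i : Fin N) (a b : ℝ), ¬(a = 0 ∧ b = 0) →
      0 < q11 i * a * a + q12 i * a * b + (q12 i * b * a + q22 i * b * b) := by
    intro i a b hab
    have hx : (Sum.elim (Pi.single i a) (Pi.single i b) : Fin N ⊕ Fin N → ℝ) ≠ 0 := by
      intro h
      rcases not_and_or.mp hab with ha | hb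
      · exact ha (by have := congrFun h (Sum.inl i); simpa using this)
      · exact hb (by have := congrFun h (Sum.inr i); simpa using this)
    have := hQ.dotProduct_mulVec_pos hx
    rw [h11, h12, h22] at this
    simpa [fromBlocks_mulVec, sumElim_dotProduct_sumElim, single_dotProduct,
      mulVec_diagonal, mul_assoc, mul_comm, mul_left_comm] using this
  have hq11pos : ∀ i, 0 < q11 i := fun i => by
    have := key i 1 0 (by simp); linarith
  have hq22pos : ∀ i, 0 < q22 i := fun i => by
    have := key i 0 1 (by simp); linarith
  -- the determinant of each 2×2 block is positive
  set d : Fin N → ℝ := fun i => q11 i * q22 i - q12 i * q12 i with hd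
  have hdpos : ∀ i, 0 < d i := by
    intro i
    have h := key i (q12 i) (-(q11 i)) (by
      intro hc
      exact absurd (neg_eq_zero.mp hc.2) (ne_of_gt (hq11pos i)))
    show 0 < q11 i * q22 i - q12 i * q12 i
    by_contra hle
    push_neg at hle
    nlinarith [mul_nonneg (hq11pos i).le
      (by linarith : (0:ℝ) ≤ q12 i * q12 i - q11 i * q22 i)]
  -- explicit inverse
  have hdne : ∀ i, d i ≠ 0 := fun i => ne_of_gt (hdpos i)
  set Qm := Matrix.fromBlocks Q₁₁ Q₁₂ Q₁₂ Q₂₂ with hQm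
  set Pm := Matrix.fromBlocks (diagonal fun i => q22 i / d i) (diagonal fun i => -q12 i / d i)
      (diagonal fun i => -q12 i / d i) (diagonal fun i => q11 i / d i) with hPm
  have b11 : diagonal q11 * (diagonal fun i => q22 i / d i)
      + diagonal q12 * (diagonal fun i => -q12 i / d i) = 1 := by
    rw [diagonal_mul_diagonal, diagonal_mul_diagonal, diagonal_add]
    ext i j
    by_cases h : i = j
    · subst h
      simp only [diagonal_apply_eq, Pi.add_apply, Matrix.one_apply_eq]
      rw [mul_div_assoc', mul_div_assoc', ← add_div, div_eq_one_iff_eq (hdne i)]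
      simp only [hd]; ring
    · simp [diagonal_apply_ne _ h, Matrix.one_apply_ne h]
  have b12 : diagonal q11 * (diagonal fun i => -q12 i / d i)
      + diagonal q12 * (diagonal fun i => q11 i / d i) = 0 := by
    rw [diagonal_mul_diagonal, diagonal_mul_diagonal, diagonal_add]
    ext i j
    by_cases h : i = j
    · subst h
      simp only [diagonal_apply_eq, Pi.add_apply, Matrix.zero_apply]
      rw [mul_div_assoc', mul_div_assoc', ← add_div, div_eq_zero_iff]
      left; ring
    · simp [diagonal_apply_ne _ h, Matrix.one_apply_ne h]
  have b21 : diagonal q12 * (diagonal fun i => q22 i / d i)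
      + diagonal q22 * (diagonal fun i => -q12 i / d i) = 0 := by
    rw [diagonal_mul_diagonal, diagonal_mul_diagonal, diagonal_add]
    ext i j
    by_cases h : i = j
    · subst h
      simp only [diagonal_apply_eq, Pi.add_apply, Matrix.zero_apply]
      rw [mul_div_assoc', mul_div_assoc', ← add_div, div_eq_zero_iff]
      left; ring
    · simp [diagonal_apply_ne _ h, Matrix.one_apply_ne h]
  have b22 : diagonal q12 * (diagonal fun i => -q12 i / d i)
      + diagonal q22 * (diagonal fun i => q11 i / d i) = 1 := by
    rw [diagonal_mul_diagonal, diagonal_mul_diagonal, diagonal_add]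
    ext i j
    by_cases h : i = j
    · subst h
      simp only [diagonal_apply_eq, Pi.add_apply, Matrix.one_apply_eq]
      rw [mul_div_assoc', mul_div_assoc', ← add_div, div_eq_one_iff_eq (hdne i)]
      simp only [hd]; ring
    · simp [diagonal_apply_ne _ h, Matrix.one_apply_ne h]
  have hmul : Qm * Pm = 1 := by
    rw [hQm, hPm, h11, h12, h22, fromBlocks_multiply, b11, b12, b21, b22, fromBlocks_one]
  have hinv : Qm⁻¹ = Pm := inv_eq_right_inv hmul
  have e11 : P₁₁ = diagonal fun i => q22 i / d i := by
    rw [hP₁₁, hinv, hPm, toBlocks_fromBlocks₁₁]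
  have e12 : P₁₂ = diagonal fun i => -q12 i / d i := by
    rw [hP₁₂, hinv, hPm, toBlocks_fromBlocks₁₂]
  have e22 : P₂₂ = diagonal fun i => q11 i / d i := by
    rw [hP₂₂, hinv, hPm, toBlocks_fromBlocks₂₂]
  -- conclude
  have eK1 : K₁ = diagonal fun i => l1 i * (q22 i / d i) + l2 i * (-q12 i / d i) := by
    rw [hK₁, hL1, hL2, e11, e12, diagonal_transpose, diagonal_mul_diagonal,
      diagonal_mul_diagonal, diagonal_add]
  have eK2 : K₂ = diagonal fun i => l1 i * (-q12 i / d i) + l2 i * (q11 i / d i) := by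
    rw [hK₂, hL1, hL2, e12, e22, diagonal_mul_diagonal, diagonal_mul_diagonal, diagonal_add]
  have hK1pos : ∀ i, 0 < l1 i * (q22 i / d i) + l2 i * (-q12 i / d i) := fun i =>
    add_pos (mul_pos (hl1pos i) (div_pos (hq22pos i) (hdpos i)))
      (mul_pos (hl2pos i) (div_pos (hq12neg i) (hdpos i)))
  have hK2pos : ∀ i, 0 < l1 i * (-q12 i / d i) + l2 i * (q11 i / d i) := fun i =>
    add_pos (mul_pos (hl1pos i) (div_pos (hq12neg i) (hdpos i)))
      (mul_pos (hl2pos i) (div_pos (hq11pos i) (hdpos i)))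
  refine ⟨?_, ?_, ?_, ?_⟩
  · rw [eK1]; exact isDiag_diagonal _
  · rw [eK1]; exact Matrix.PosDef.diagonal hK1pos
  · rw [eK2]; exact isDiag_diagonal _
  · rw [eK2]; exact Matrix.PosDef.diagonal hK2pos
end

section
/- Let N ≥ 1 and let Q₁₁, Q₁₂, Q₂₂ be real N×N diagonal matrices such that Q = [[Q₁₁, Q₁₂], [Q₁₂, Q₂₂]] is symmetric positive definite and Q₁₂ is negative definite. Write Q⁻¹ = [[P₁₁, P₁₂], [P₁₂ᵀ, P₂₂]] in N×N blocks. Then P₁₂ = P₁₁·(−Q₁₂)·Q₂₂⁻¹, and P₁₂ is a positive definite diagonal matrix. -/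
open Matrix

/-- The off-diagonal block of the inverse: `P₁₂ = P₁₁ (−Q₁₂) Q₂₂⁻¹`, and `P₁₂` is a
positive definite diagonal matrix when `Q₁₂ ≺ 0`. -/
theorem stmt_3 {N : ℕ} (hN : 1 ≤ N)
    (Q₁₁ Q₁₂ Q₂₂ : Matrix (Fin N) (Fin N) ℝ)
    (hQ₁₁d : Q₁₁.IsDiag) (hQ₁₂d : Q₁₂.IsDiag) (hQ₂₂d : Q₂₂.IsDiag)
    (hQ : (Matrix.fromBlocks Q₁₁ Q₁₂ Q₁₂ Q₂₂).PosDef)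
    (hQ₁₂ : (-Q₁₂).PosDef)
    (P₁₁ P₁₂ : Matrix (Fin N) (Fin N) ℝ)
    (hP₁₁ : P₁₁ = (Matrix.fromBlocks Q₁₁ Q₁₂ Q₁₂ Q₂₂)⁻¹.toBlocks₁₁)
    (hP₁₂ : P₁₂ = (Matrix.fromBlocks Q₁₁ Q₁₂ Q₁₂ Q₂₂)⁻¹.toBlocks₁₂) :
    P₁₂ = P₁₁ * (-Q₁₂) * Q₂₂⁻¹ ∧ P₁₂.IsDiag ∧ P₁₂.PosDef := by
  set a : Fin N → ℝ := Q₁₁.diag with ha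
  set b : Fin N → ℝ := Q₁₂.diag with hb
  set c : Fin N → ℝ := Q₂₂.diag with hc
  have hA : Q₁₁ = diagonal a := (hQ₁₁d.diagonal_diag).symm
  have hB : Q₁₂ = diagonal b := (hQ₁₂d.diagonal_diag).symm
  have hC : Q₂₂ = diagonal c := (hQ₂₂d.diagonal_diag).symm
  rw [hA, hB, hC] at hQ hP₁₁ hP₁₂
  rw [hB] at hQ₁₂
  rw [hB, hC]
  clear ha hb hc hA hB hC hQ₁₁d hQ₁₂d hQ₂₂d
  -- b i < 0
  have hbneg : ∀ i, b i < 0 := by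
    intro i
    have hx : (Pi.single i 1 : Fin N → ℝ) ≠ 0 := by
      intro h
      simpa using congrFun h i
    have := hQ₁₂.dotProduct_mulVec_pos hx
    simp [single_dotProduct, mulVec_diagonal] at this
    linarith
  -- quadratic form
  have key : ∀ (i : Fin N) (s t : ℝ), s ≠ 0 ∨ t ≠ 0 →
      0 < a i * (s * s) + 2 * b i * (s * t) + c i * (t * t) := by
    intro i s t hst
    have hx : (Sum.elim (Pi.single i s) (Pi.single i t) : Fin N ⊕ Fin N → ℝ) ≠ 0 := by
      intro h
      rcases hst with hs | ht
      · exact hs (by simpa using congrFun h (Sum.inl i))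
      · exact ht (by simpa using congrFun h (Sum.inr i))
    have := hQ.dotProduct_mulVec_pos hx
    simp only [fromBlocks_mulVec, star_trivial, sumElim_dotProduct_sumElim,
      dotProduct_add, single_dotProduct, Pi.add_apply, Sum.elim_comp_inl, Sum.elim_comp_inr,
      mulVec_diagonal, Pi.single_eq_same] at this
    nlinarith [this]
  have hapos : ∀ i, 0 < a i := by
    intro i
    have := key i 1 0 (Or.inl one_ne_zero)
    nlinarith
  have hcpos : ∀ i, 0 < c i := by
    intro i
    have := key i 0 1 (Or.inr one_ne_zero)
    nlinarith
  have hdpos : ∀ i, 0 < a i * c i - b i * b i := by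
    intro i
    have hci := hcpos i
    have h1 := key i (c i) (-(b i)) (Or.inl hci.ne')
    have h2 : 0 < c i * (a i * c i - b i * b i) := by nlinarith [h1]
    by_contra hle
    push_neg at hle
    nlinarith
  set d : Fin N → ℝ := fun i => a i * c i - b i * b i with hd
  have hdpos' : ∀ i, 0 < d i := hdpos
  have hdne : ∀ i, d i ≠ 0 := fun i => (hdpos' i).ne'
  have hcne : ∀ i, c i ≠ 0 := fun i => (hcpos i).ne'
  -- explicit inverse
  set T : Matrix (Fin N ⊕ Fin N) (Fin N ⊕ Fin N) ℝ :=
    fromBlocks (diagonal fun i => c i / d i) (diagonal fun i => -b i / d i)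
      (diagonal fun i => -b i / d i) (diagonal fun i => a i / d i) with hT
  have e11 : diagonal a * diagonal (fun i => c i / d i)
      + diagonal b * diagonal (fun i => -b i / d i) = 1 := by
    rw [diagonal_mul_diagonal, diagonal_mul_diagonal, diagonal_add, ← diagonal_one]
    refine congrArg diagonal (funext fun i => ?_)
    have h := hdne i
    field_simp
    simp only [hd]
    ring
  have e12 : diagonal a * diagonal (fun i => -b i / d i)
      + diagonal b * diagonal (fun i => a i / d i) = 0 := by
    rw [diagonal_mul_diagonal, diagonal_mul_diagonal, diagonal_add, ← diagonal_zero]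
    refine congrArg diagonal (funext fun i => ?_)
    have h := hdne i
    field_simp
    ring
  have e21 : diagonal b * diagonal (fun i => c i / d i)
      + diagonal c * diagonal (fun i => -b i / d i) = 0 := by
    rw [diagonal_mul_diagonal, diagonal_mul_diagonal, diagonal_add, ← diagonal_zero]
    refine congrArg diagonal (funext fun i => ?_)
    have h := hdne i
    field_simp
    ring
  have e22 : diagonal b * diagonal (fun i => -b i / d i)
      + diagonal c * diagonal (fun i => a i / d i) = 1 := by
    rw [diagonal_mul_diagonal, diagonal_mul_diagonal, diagonal_add, ← diagonal_one]
    refine congrArg diagonal (funext fun i => ?_)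
    have h := hdne i
    field_simp
    simp only [hd]
    ring
  have hST : fromBlocks (diagonal a) (diagonal b) (diagonal b) (diagonal c) * T = 1 := by
    rw [hT, fromBlocks_multiply, e11, e12, e21, e22, fromBlocks_one]
  have hinv : (fromBlocks (diagonal a) (diagonal b) (diagonal b) (diagonal c))⁻¹ = T :=
    inv_eq_right_inv hST
  rw [hinv, hT, toBlocks_fromBlocks₁₁] at hP₁₁
  rw [hinv, hT, toBlocks_fromBlocks₁₂] at hP₁₂
  refine ⟨?_, ?_, ?_⟩
  · have hCinv : (diagonal c)⁻¹ = diagonal (fun i => (c i)⁻¹) := inv_eq_right_inv (by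
      rw [diagonal_mul_diagonal, ← diagonal_one]
      exact congrArg diagonal (funext fun i => mul_inv_cancel₀ (hcne i)))
    rw [hP₁₁, hP₁₂, hCinv, diagonal_neg, diagonal_mul_diagonal, diagonal_mul_diagonal]
    refine congrArg diagonal (funext fun i => ?_)
    have h1 := hdne i
    have h2 := hcne i
    field_simp
  · rw [hP₁₂]; exact isDiag_diagonal _
  · rw [hP₁₂]
    exact Matrix.PosDef.diagonal fun i => div_pos (by linarith [hbneg i]) (hdpos' i)
end

section
/- Let P be a symmetric positive semidefinite n×n real matrix, A_cl an n×n real matrix, B₂ an n×m real matrix, C a p×n real matrix, and γ > 0, and suppose the symmetric matrix (A_cl)ᵀP + P·A_cl + γ⁻¹CᵀC + γ⁻¹P·B₂B₂ᵀ·P is negative semidefinite. Let x : ℝ → ℝⁿ be differentiable and d : ℝ → ℝᵐ be such that x′(t) = A_cl·x(t) + B₂·d(t) for all t. Then the function V(t) = x(t)ᵀP·x(t) is differentiable and satisfies V′(t) ≤ −γ⁻¹‖C·x(t)‖² + γ‖d(t)‖² for all t, where ‖·‖ is the Euclidean norm. -/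
open Matrix

private lemma dot_transpose_mulVec {a b : ℕ} (A : Matrix (Fin a) (Fin b) ℝ)
    (w : Fin a → ℝ) (v : Fin b → ℝ) :
    w ⬝ᵥ A.mulVec v = (Aᵀ.mulVec w) ⬝ᵥ v := by
  rw [dotProduct_mulVec, ← mulVec_transpose]

/-- Pointwise dissipation inequality for the quadratic storage function
`V(t) = x(t)ᵀ P x(t)` along trajectories of `x' = A_cl x + B₂ d`:
`V'(t) ≤ −γ⁻¹‖C x(t)‖² + γ‖d(t)‖²` (Euclidean norms, written via sums of squares). -/
theorem stmt_7 {n m p : ℕ}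
    (P : Matrix (Fin n) (Fin n) ℝ) (hP : P.PosSemidef)
    (Acl : Matrix (Fin n) (Fin n) ℝ)
    (B₂ : Matrix (Fin n) (Fin m) ℝ) (C : Matrix (Fin p) (Fin n) ℝ)
    (γ : ℝ) (hγ : 0 < γ)
    (hLMI : (-(Aclᵀ * P + P * Acl + γ⁻¹ • (Cᵀ * C)
        + γ⁻¹ • (P * B₂ * B₂ᵀ * P))).PosSemidef)
    (x : ℝ → (Fin n → ℝ)) (d : ℝ → (Fin m → ℝ))
    (hx : Differentiable ℝ x)
    (hdyn : ∀ t, deriv x t = Acl.mulVec (x t) + B₂.mulVec (d t))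
    (V : ℝ → ℝ) (hV : V = fun t => x t ⬝ᵥ P.mulVec (x t)) :
    Differentiable ℝ V ∧
    ∀ t, deriv V t ≤ -γ⁻¹ * (∑ i, (C.mulVec (x t)) i ^ 2)
        + γ * (∑ i, (d t) i ^ 2) := by
  have hPsym : Pᵀ = P := hP.1
  have hxi : ∀ t i, HasDerivAt (fun s => x s i) (deriv x t i) t :=
    fun t i => hasDerivAt_pi.mp (hx t).hasDerivAt i
  have key : ∀ t, HasDerivAt V
      (deriv x t ⬝ᵥ P.mulVec (x t) + x t ⬝ᵥ P.mulVec (deriv x t)) t := by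
    intro t
    have h : HasDerivAt (fun s => ∑ i, (x s i * ∑ j, P i j * x s j))
        (∑ i, (deriv x t i * ∑ j, P i j * x t j
              + x t i * ∑ j, P i j * deriv x t j)) t := by
      refine HasDerivAt.fun_sum fun i _ => ?_
      exact (hxi t i).mul (HasDerivAt.fun_sum fun j _ => (hxi t j).const_mul (P i j))
    have heq : V = fun s => ∑ i, (x s i * ∑ j, P i j * x s j) := by
      funext s; simp [hV, dotProduct, mulVec]
    rw [heq]
    convert h using 1
    simp [dotProduct, mulVec, Finset.sum_add_distrib]
  constructor
  · exact fun t => (key t).differentiableAt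
  · intro t
    set v := x t with hv
    set w := d t with hw
    set u := B₂ᵀ.mulVec (P.mulVec v) with hu
    have hPv : P.vecMul v = P.mulVec v := by
      rw [← mulVec_transpose, hPsym]
    have hderiv : deriv V t =
        (Acl.mulVec v + B₂.mulVec w) ⬝ᵥ P.mulVec v
        + v ⬝ᵥ P.mulVec (Acl.mulVec v + B₂.mulVec w) := by
      rw [(key t).deriv, hdyn t]
    -- quadratic pieces
    have hgen : ∀ z : Fin m → ℝ, v ⬝ᵥ P.mulVec (B₂.mulVec z) = z ⬝ᵥ u := by
      intro z
      rw [dot_transpose_mulVec P v (B₂.mulVec z), hPsym,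
        dot_transpose_mulVec B₂ (P.mulVec v) z, ← hu, dotProduct_comm]
    have hcross2 : v ⬝ᵥ P.mulVec (B₂.mulVec w) = w ⬝ᵥ u := hgen w
    have hcross1 : (B₂.mulVec w) ⬝ᵥ P.mulVec v = w ⬝ᵥ u := by
      rw [dotProduct_comm, dotProduct_mulVec, ← mulVec_transpose, ← hu, dotProduct_comm]
    have hq1a : (Acl.mulVec v) ⬝ᵥ P.mulVec v = v ⬝ᵥ (Aclᵀ * P).mulVec v := by
      rw [← mulVec_mulVec, dot_transpose_mulVec Aclᵀ, transpose_transpose,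
        dotProduct_mulVec, ← mulVec_transpose]
    have hq1b : v ⬝ᵥ P.mulVec (Acl.mulVec v) = v ⬝ᵥ (P * Acl).mulVec v := by
      rw [← mulVec_mulVec]
    have hqc : v ⬝ᵥ (Cᵀ * C).mulVec v = ∑ i, (C.mulVec v) i ^ 2 := by
      rw [← mulVec_mulVec, dot_transpose_mulVec Cᵀ, transpose_transpose]
      simp [dotProduct, sq]
    have hqb : v ⬝ᵥ (P * B₂ * B₂ᵀ * P).mulVec v = ∑ i, u i ^ 2 := by
      have : (P * B₂ * B₂ᵀ * P).mulVec v
          = P.mulVec (B₂.mulVec (B₂ᵀ.mulVec (P.mulVec v))) := by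
        rw [← mulVec_mulVec, ← mulVec_mulVec, ← mulVec_mulVec]
      rw [this, hgen u]
      simp [dotProduct, sq]
    -- LMI fact
    have hlmi := hLMI.dotProduct_mulVec_nonneg v
    rw [star_trivial] at hlmi
    have hlmi' : v ⬝ᵥ (Aclᵀ * P).mulVec v + v ⬝ᵥ (P * Acl).mulVec v
        + γ⁻¹ * (∑ i, (C.mulVec v) i ^ 2) + γ⁻¹ * (∑ i, u i ^ 2) ≤ 0 := by
      have h0 : (0:ℝ) ≤ v ⬝ᵥ (-(Aclᵀ * P + P * Acl + γ⁻¹ • (Cᵀ * C)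
          + γ⁻¹ • (P * B₂ * B₂ᵀ * P))).mulVec v := by exact_mod_cast hlmi
      rw [neg_mulVec, dotProduct_neg, add_mulVec, add_mulVec, add_mulVec,
        smul_mulVec, smul_mulVec, dotProduct_add, dotProduct_add,
        dotProduct_add, dotProduct_smul, dotProduct_smul] at h0
      simp only [smul_eq_mul] at h0
      rw [hqc, hqb] at h0
      linarith
    -- Young's inequality
    have hyoung : 2 * (w ⬝ᵥ u) ≤ γ * (∑ i, w i ^ 2) + γ⁻¹ * (∑ i, u i ^ 2) := by
      have h0 : (0:ℝ) ≤ ∑ i, (γ * w i - u i) ^ 2 :=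
        Finset.sum_nonneg fun i _ => sq_nonneg _
      have hexp : ∑ i, (γ * w i - u i) ^ 2
          = γ ^ 2 * (∑ i, w i ^ 2) - 2 * γ * (w ⬝ᵥ u) + (∑ i, u i ^ 2) := by
        simp only [dotProduct, Finset.mul_sum, ← Finset.sum_sub_distrib,
          ← Finset.sum_add_distrib]
        congr 1; funext i; ring
      rw [hexp] at h0
      have hne : γ ≠ 0 := hγ.ne'
      have h1 : 2 * γ * (w ⬝ᵥ u) ≤ γ ^ 2 * (∑ i, w i ^ 2) + (∑ i, u i ^ 2) := by
        linarith
      have h2 := mul_le_mul_of_nonneg_left h1 (le_of_lt (inv_pos.mpr hγ))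
      calc 2 * (w ⬝ᵥ u) = γ⁻¹ * (2 * γ * (w ⬝ᵥ u)) := by field_simp
        _ ≤ γ⁻¹ * (γ ^ 2 * (∑ i, w i ^ 2) + (∑ i, u i ^ 2)) := h2
        _ = γ * (∑ i, w i ^ 2) + γ⁻¹ * (∑ i, u i ^ 2) := by field_simp
    have hdV : deriv V t = v ⬝ᵥ (Aclᵀ * P).mulVec v + v ⬝ᵥ (P * Acl).mulVec v
        + 2 * (w ⬝ᵥ u) := by
      rw [hderiv, add_dotProduct, mulVec_add, dotProduct_add, hcross1, hcross2, hq1a, hq1b]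
      ring
    rw [hdV]
    linarith
end

section
/- Let P be a symmetric positive semidefinite n×n real matrix, A_cl an n×n real matrix, B₂ an n×m real matrix, C a p×n real matrix, and γ > 0, and suppose (A_cl)ᵀP + P·A_cl + γ⁻¹CᵀC + γ⁻¹P·B₂B₂ᵀ·P is negative semidefinite. Let x : ℝ → ℝⁿ be differentiable with continuous derivative, d : ℝ → ℝᵐ be continuous, x′(t) = A_cl·x(t) + B₂·d(t) for all t, and x(0) = 0. Then for every T ≥ 0, ∫₀ᵀ ‖C·x(t)‖² dt ≤ γ² ∫₀ᵀ ‖d(t)‖² dt, where ‖·‖ is the Euclidean norm. -/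
open Matrix

private lemma dot_hasDerivAt {n : ℕ} {u v : ℝ → Fin n → ℝ} {u' v' : Fin n → ℝ} {t : ℝ}
    (hu : HasDerivAt u u' t) (hv : HasDerivAt v v' t) :
    HasDerivAt (fun s => u s ⬝ᵥ v s) (u' ⬝ᵥ v t + u t ⬝ᵥ v') t := by
  have hu2 := hasDerivAt_pi.mp hu
  have hv2 := hasDerivAt_pi.mp hv
  have : HasDerivAt (fun s => ∑ i, u s i * v s i)
      (∑ i, (u' i * v t i + u t i * v' i)) t :=
    HasDerivAt.fun_sum fun i _ => (hu2 i).mul (hv2 i)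
  simpa [dotProduct, Finset.sum_add_distrib] using this

private lemma mulVec_hasDerivAt {a b : ℕ} (M : Matrix (Fin a) (Fin b) ℝ)
    {x : ℝ → Fin b → ℝ} {x' : Fin b → ℝ} {t : ℝ} (hx : HasDerivAt x x' t) :
    HasDerivAt (fun s => M.mulVec (x s)) (M.mulVec x') t := by
  have hx2 := hasDerivAt_pi.mp hx
  refine hasDerivAt_pi.mpr fun i => ?_
  have : HasDerivAt (fun s => ∑ j, M i j * x s j) (∑ j, M i j * x' j) t :=
    HasDerivAt.fun_sum fun j _ => (hx2 j).const_mul (M i j)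
  simpa [mulVec, dotProduct] using this

private lemma cont_mulVec {a b : ℕ} (M : Matrix (Fin a) (Fin b) ℝ)
    {f : ℝ → Fin b → ℝ} (hf : Continuous f) :
    Continuous fun t => M.mulVec (f t) := by
  refine continuous_pi fun i => ?_
  simp only [mulVec, dotProduct]
  exact continuous_finset_sum _ fun j _ => continuous_const.mul ((continuous_apply j).comp hf)

private lemma cont_dot {a : ℕ} {f g : ℝ → Fin a → ℝ} (hf : Continuous f) (hg : Continuous g) :
    Continuous fun t => f t ⬝ᵥ g t := by
  simp only [dotProduct]
  exact continuous_finset_sum _ fun j _ =>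
    ((continuous_apply j).comp hf).mul ((continuous_apply j).comp hg)

private lemma mulVec_dot_symm {a b : ℕ} (M : Matrix (Fin a) (Fin b) ℝ)
    (u : Fin a → ℝ) (v : Fin b → ℝ) :
    u ⬝ᵥ M.mulVec v = Mᵀ.mulVec u ⬝ᵥ v := by
  simp only [dotProduct, mulVec, transpose_apply, Finset.mul_sum, Finset.sum_mul]
  rw [Finset.sum_comm]
  exact Finset.sum_congr rfl fun i _ => Finset.sum_congr rfl fun j _ => by ring

/-- Finite-horizon L₂-gain bound: under the dissipation matrix inequality, the
closed-loop trajectory started at the origin satisfies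
`∫₀ᵀ ‖C x(t)‖² dt ≤ γ² ∫₀ᵀ ‖d(t)‖² dt` (Euclidean norms, via sums of squares). -/
theorem stmt_8 {n m p : ℕ}
    (P : Matrix (Fin n) (Fin n) ℝ) (hP : P.PosSemidef)
    (Acl : Matrix (Fin n) (Fin n) ℝ)
    (B₂ : Matrix (Fin n) (Fin m) ℝ) (C : Matrix (Fin p) (Fin n) ℝ)
    (γ : ℝ) (hγ : 0 < γ)
    (hLMI : (-(Aclᵀ * P + P * Acl + γ⁻¹ • (Cᵀ * C)
        + γ⁻¹ • (P * B₂ * B₂ᵀ * P))).PosSemidef)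
    (x : ℝ → (Fin n → ℝ)) (d : ℝ → (Fin m → ℝ))
    (hx : Differentiable ℝ x) (hx' : Continuous (deriv x)) (hd : Continuous d)
    (hdyn : ∀ t, deriv x t = Acl.mulVec (x t) + B₂.mulVec (d t))
    (hx0 : x 0 = 0) :
    ∀ T ≥ (0 : ℝ),
      ∫ t in (0 : ℝ)..T, (∑ i, (C.mulVec (x t)) i ^ 2) ≤
        γ ^ 2 * ∫ t in (0 : ℝ)..T, (∑ i, (d t) i ^ 2) := by
  have hPsym : Pᵀ = P := hP.1
  have hxc : Continuous x := hx.continuous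
  set V : ℝ → ℝ := fun t => x t ⬝ᵥ P.mulVec (x t) with hVdef
  set g : ℝ → ℝ := fun t => deriv x t ⬝ᵥ P.mulVec (x t) + x t ⬝ᵥ P.mulVec (deriv x t) with hgdef
  have hV : ∀ t, HasDerivAt V (g t) t := fun t =>
    dot_hasDerivAt (hx t).hasDerivAt (mulVec_hasDerivAt P (hx t).hasDerivAt)
  have hgc : Continuous g :=
    (cont_dot hx' (cont_mulVec P hxc)).add (cont_dot hxc (cont_mulVec P hx'))
  have hbound : ∀ t, g t ≤ γ * (d t ⬝ᵥ d t) - γ⁻¹ * (C.mulVec (x t) ⬝ᵥ C.mulVec (x t)) := by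
    intro t
    have hsym : ∀ v : Fin n → ℝ, x t ⬝ᵥ P.mulVec v = P.mulVec (x t) ⬝ᵥ v := by
      intro v; rw [mulVec_dot_symm, hPsym]
    have hLMIa := hLMI.dotProduct_mulVec_nonneg (x t)
    simp only [star_trivial, neg_mulVec, dotProduct_neg, add_mulVec, smul_mulVec,
      dotProduct_add, dotProduct_smul, smul_eq_mul, ← mulVec_mulVec, le_neg, neg_zero] at hLMIa
    have e1 : x t ⬝ᵥ Aclᵀ.mulVec (P.mulVec (x t))
        = Acl.mulVec (x t) ⬝ᵥ P.mulVec (x t) := by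
      rw [mulVec_dot_symm, transpose_transpose]
    have e3 : x t ⬝ᵥ Cᵀ.mulVec (C.mulVec (x t))
        = C.mulVec (x t) ⬝ᵥ C.mulVec (x t) := by
      rw [mulVec_dot_symm, transpose_transpose]
    have e4 : x t ⬝ᵥ P.mulVec (B₂.mulVec (B₂ᵀ.mulVec (P.mulVec (x t))))
        = B₂ᵀ.mulVec (P.mulVec (x t)) ⬝ᵥ B₂ᵀ.mulVec (P.mulVec (x t)) := by
      rw [hsym, mulVec_dot_symm]
    rw [e1, hsym, e3, e4] at hLMIa
    -- abbreviations
    set a := x t with ha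
    set b := d t with hb
    set q := P.mulVec a with hq
    set w := B₂ᵀ.mulVec q with hw
    set c := C.mulVec a with hc
    -- Young's inequality: 2 b⬝w ≤ γ b⬝b + γ⁻¹ w⬝w
    have young : 2 * (b ⬝ᵥ w) ≤ γ * (b ⬝ᵥ b) + γ⁻¹ * (w ⬝ᵥ w) := by
      have h0 : 0 ≤ ∑ i, γ⁻¹ * (γ * b i - w i) ^ 2 :=
        Finset.sum_nonneg fun i _ => mul_nonneg (inv_nonneg.2 hγ.le) (sq_nonneg _)
      have hexp : ∀ i, γ⁻¹ * (γ * b i - w i) ^ 2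
          = γ * (b i * b i) - 2 * (b i * w i) + γ⁻¹ * (w i * w i) := by
        intro i; field_simp; ring
      simp only [hexp] at h0
      simp only [dotProduct, Finset.mul_sum, Finset.sum_add_distrib,
        Finset.sum_sub_distrib] at h0 ⊢
      linarith
    have hgt : g t = 2 * (Acl.mulVec a ⬝ᵥ q) + 2 * (b ⬝ᵥ w) := by
      simp only [hgdef, hdyn t, ← ha, ← hb]
      rw [add_dotProduct, hsym, dotProduct_add, ← hq]
      have e5 : B₂.mulVec b ⬝ᵥ q = b ⬝ᵥ w := by
        rw [dotProduct_comm, mulVec_dot_symm, ← hw, dotProduct_comm]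
      have e6 : q ⬝ᵥ Acl.mulVec a = Acl.mulVec a ⬝ᵥ q := dotProduct_comm _ _
      have e7 : q ⬝ᵥ B₂.mulVec b = b ⬝ᵥ w := by rw [dotProduct_comm]; exact e5
      rw [e5, e6, e7]; ring
    have hww : (0:ℝ) ≤ w ⬝ᵥ w := Finset.sum_nonneg fun i _ => mul_self_nonneg _
    rw [hgt]
    linarith [dotProduct_comm q (Acl.mulVec a)]
  intro T hT
  have hCc : Continuous fun t => C.mulVec (x t) ⬝ᵥ C.mulVec (x t) :=
    cont_dot (cont_mulVec C hxc) (cont_mulVec C hxc)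
  have hdd : Continuous fun t => d t ⬝ᵥ d t := cont_dot hd hd
  have hgi : IntervalIntegrable g MeasureTheory.volume 0 T := hgc.intervalIntegrable 0 T
  have hrhsi : IntervalIntegrable
      (fun t => γ * (d t ⬝ᵥ d t) - γ⁻¹ * (C.mulVec (x t) ⬝ᵥ C.mulVec (x t)))
      MeasureTheory.volume 0 T :=
    ((continuous_const.mul hdd).sub (continuous_const.mul hCc)).intervalIntegrable 0 T
  have hFTC : ∫ t in (0:ℝ)..T, g t = V T - V 0 :=
    intervalIntegral.integral_eq_sub_of_hasDerivAt (fun t _ => hV t) hgi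
  have hV0 : V 0 = 0 := by simp [hVdef, hx0]
  have hVT : 0 ≤ V T := by simpa using hP.dotProduct_mulVec_nonneg (x T)
  have hmono : ∫ t in (0:ℝ)..T, g t ≤
      ∫ t in (0:ℝ)..T, (γ * (d t ⬝ᵥ d t) - γ⁻¹ * (C.mulVec (x t) ⬝ᵥ C.mulVec (x t))) :=
    intervalIntegral.integral_mono_on hT hgi hrhsi fun t _ => hbound t
  have hsplit : ∫ t in (0:ℝ)..T, (γ * (d t ⬝ᵥ d t) - γ⁻¹ * (C.mulVec (x t) ⬝ᵥ C.mulVec (x t)))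
      = γ * (∫ t in (0:ℝ)..T, d t ⬝ᵥ d t)
        - γ⁻¹ * ∫ t in (0:ℝ)..T, C.mulVec (x t) ⬝ᵥ C.mulVec (x t) := by
    rw [intervalIntegral.integral_sub (f := fun t => γ * (d t ⬝ᵥ d t))
      (g := fun t => γ⁻¹ * (C.mulVec (x t) ⬝ᵥ C.mulVec (x t)))
      ((continuous_const.mul hdd).intervalIntegrable 0 T)
      ((continuous_const.mul hCc).intervalIntegrable 0 T),
      intervalIntegral.integral_const_mul, intervalIntegral.integral_const_mul]
  rw [hsplit] at hmono
  rw [hFTC, hV0, sub_zero] at hmono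
  have hgoal1 : ∀ t, (∑ i, (C.mulVec (x t)) i ^ 2) = C.mulVec (x t) ⬝ᵥ C.mulVec (x t) := by
    intro t; simp [dotProduct, sq]
  have hgoal2 : ∀ t, (∑ i, (d t) i ^ 2) = d t ⬝ᵥ d t := by
    intro t; simp [dotProduct, sq]
  simp only [hgoal1, hgoal2]
  have key : γ⁻¹ * (∫ t in (0:ℝ)..T, C.mulVec (x t) ⬝ᵥ C.mulVec (x t))
      ≤ γ * ∫ t in (0:ℝ)..T, d t ⬝ᵥ d t := by linarith
  have hmul := mul_le_mul_of_nonneg_left key hγ.le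
  have hγne : γ ≠ 0 := hγ.ne'
  calc ∫ t in (0:ℝ)..T, C.mulVec (x t) ⬝ᵥ C.mulVec (x t)
      = γ * (γ⁻¹ * ∫ t in (0:ℝ)..T, C.mulVec (x t) ⬝ᵥ C.mulVec (x t)) := by
        field_simp
    _ ≤ γ * (γ * ∫ t in (0:ℝ)..T, d t ⬝ᵥ d t) := hmul
    _ = γ ^ 2 * ∫ t in (0:ℝ)..T, d t ⬝ᵥ d t := by ring
end

section
/- Let A, B₁, B₂, C be real matrices of sizes n×n, n×N, n×m, p×n respectively, let γ > 0, let Q be a symmetric positive definite n×n matrix and L an N×n matrix, and suppose the block matrix M̄ = [[QAᵀ − LᵀB₁ᵀ + AQ − B₁L, B₂, QCᵀ], [B₂ᵀ, −γI, 0], [CQ, 0, −γI]] is negative definite. Set K = LQ⁻¹. Then for every differentiable x : ℝ → ℝⁿ with continuous derivative and every continuous d : ℝ → ℝᵐ satisfying x′(t) = (A − B₁K)·x(t) + B₂·d(t) for all t and x(0) = 0, one has ∫₀ᵀ ‖C·x(t)‖² dt ≤ γ² ∫₀ᵀ ‖d(t)‖² dt for every T ≥ 0, where ‖·‖ is the Euclidean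 norm. -/
open Matrix

/-- LMI 1 of the paper: feasibility of the H∞-synthesis LMI yields a state feedback
`K = LQ⁻¹` guaranteeing L₂ gain at most `γ` from the disturbance `d` to the
performance output `Cx` of the linearized closed loop. -/
theorem stmt_9 {n m p N : ℕ}
    (A : Matrix (Fin n) (Fin n) ℝ) (B₁ : Matrix (Fin n) (Fin N) ℝ)
    (B₂ : Matrix (Fin n) (Fin m) ℝ) (C : Matrix (Fin p) (Fin n) ℝ)
    (γ : ℝ) (hγ : 0 < γ)
    (Q : Matrix (Fin n) (Fin n) ℝ) (hQ : Q.PosDef)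
    (L : Matrix (Fin N) (Fin n) ℝ)
    (Mbar : Matrix (Fin n ⊕ (Fin m ⊕ Fin p)) (Fin n ⊕ (Fin m ⊕ Fin p)) ℝ)
    (hMbar : Mbar = Matrix.fromBlocks
      (Q * Aᵀ - Lᵀ * B₁ᵀ + A * Q - B₁ * L)
      (Matrix.fromCols B₂ (Q * Cᵀ))
      (Matrix.fromRows B₂ᵀ (C * Q))
      (Matrix.fromBlocks (-(γ • (1 : Matrix (Fin m) (Fin m) ℝ))) 0 0
        (-(γ • (1 : Matrix (Fin p) (Fin p) ℝ)))))
    (hLMI : (-Mbar).PosDef)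
    (K : Matrix (Fin N) (Fin n) ℝ) (hK : K = L * Q⁻¹) :
    ∀ (x : ℝ → (Fin n → ℝ)) (d : ℝ → (Fin m → ℝ)),
      Differentiable ℝ x → Continuous (deriv x) → Continuous d →
      (∀ t, deriv x t = (A - B₁ * K).mulVec (x t) + B₂.mulVec (d t)) →
      x 0 = 0 →
      ∀ T ≥ (0 : ℝ),
        ∫ t in (0 : ℝ)..T, (∑ i, (C.mulVec (x t)) i ^ 2) ≤
          γ ^ 2 * ∫ t in (0 : ℝ)..T, (∑ i, (d t) i ^ 2) := by
  intro x d hdx hcx hcd hode hx0 T hT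
  set P : Matrix (Fin n) (Fin n) ℝ := Q⁻¹ with hPdef
  have hQdet : IsUnit Q.det := hQ.det_pos.ne'.isUnit
  have hQP : Q * P = 1 := Q.mul_nonsing_inv hQdet
  have hPQ : P * Q = 1 := Q.nonsing_inv_mul hQdet
  have hPsym : Pᵀ = P := by
    rw [hPdef, Matrix.transpose_nonsing_inv]; congr 1; exact hQ.isHermitian
  have hQsym : Qᵀ = Q := hQ.isHermitian
  have hP : P.PosDef := hQ.inv
  set AK : Matrix (Fin n) (Fin n) ℝ := A - B₁ * K with hAK
  have hQPv : ∀ y : Fin n → ℝ, Q.mulVec (P.mulVec y) = y := by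
    intro y; rw [Matrix.mulVec_mulVec, hQP, Matrix.one_mulVec]
  have hPQv : ∀ y : Fin n → ℝ, P.mulVec (Q.mulVec y) = y := by
    intro y; rw [Matrix.mulVec_mulVec, hPQ, Matrix.one_mulVec]
  have hPdot : ∀ y z : Fin n → ℝ, P.mulVec y ⬝ᵥ z = y ⬝ᵥ P.mulVec z := by
    intro y z
    rw [Matrix.dotProduct_mulVec, ← Matrix.mulVec_transpose, hPsym, dotProduct_comm]
  have hTdot : ∀ {k l : ℕ} (M : Matrix (Fin k) (Fin l) ℝ) (y : Fin l → ℝ) (z : Fin k → ℝ),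
      y ⬝ᵥ Mᵀ.mulVec z = M.mulVec y ⬝ᵥ z := by
    intro k l M y z
    simp only [dotProduct, Matrix.mulVec, Matrix.transpose_apply, Finset.mul_sum,
      Finset.sum_mul]
    rw [Finset.sum_comm]
    exact Finset.sum_congr rfl fun i _ => Finset.sum_congr rfl fun j _ => by ring
  have hL : L = K * Q := by rw [hK, Matrix.mul_assoc, hPQ, Matrix.mul_one]
  have hM11 : Q * Aᵀ - Lᵀ * B₁ᵀ + A * Q - B₁ * L = Q * AKᵀ + AK * Q := by
    rw [hL, hAK]
    simp only [Matrix.transpose_sub, Matrix.transpose_mul, hQsym, Matrix.sub_mul,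
      Matrix.mul_sub, Matrix.mul_assoc]
    abel
  -- the key pointwise dissipation inequality
  have key : ∀ (a : Fin n → ℝ) (dv : Fin m → ℝ),
      (AK.mulVec a + B₂.mulVec dv) ⬝ᵥ P.mulVec a
        + a ⬝ᵥ P.mulVec (AK.mulVec a + B₂.mulVec dv)
        + γ⁻¹ * (C.mulVec a ⬝ᵥ C.mulVec a) - γ * (dv ⬝ᵥ dv) ≤ 0 := by
    intro a dv
    set v : (Fin n ⊕ (Fin m ⊕ Fin p)) → ℝ :=
      Sum.elim (P.mulVec a) (Sum.elim dv (γ⁻¹ • C.mulVec a)) with hv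
    have h0 : v ⬝ᵥ Mbar.mulVec v ≤ 0 := by
      have h := hLMI.posSemidef.dotProduct_mulVec_nonneg v
      simp only [Matrix.neg_mulVec, dotProduct_neg, star_trivial] at h
      linarith
    have heq : (AK.mulVec a + B₂.mulVec dv) ⬝ᵥ P.mulVec a
        + a ⬝ᵥ P.mulVec (AK.mulVec a + B₂.mulVec dv)
        + γ⁻¹ * (C.mulVec a ⬝ᵥ C.mulVec a) - γ * (dv ⬝ᵥ dv)
        = v ⬝ᵥ Mbar.mulVec v := by
      rw [hMbar, hM11, hv]
      simp only [Matrix.fromBlocks_mulVec, Sum.elim_comp_inl, Sum.elim_comp_inr,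
        Matrix.fromCols_mulVec_sumElim, Matrix.fromRows_mulVec,
        Matrix.add_mulVec, Matrix.mulVec_add, Matrix.neg_mulVec, Matrix.zero_mulVec,
        Matrix.smul_mulVec, Matrix.one_mulVec, Matrix.mulVec_smul,
        ← Matrix.mulVec_mulVec, hQPv, hPQv, sumElim_dotProduct_sumElim,
        dotProduct_add, add_dotProduct, dotProduct_neg,
        neg_dotProduct, dotProduct_smul, smul_dotProduct,
        smul_eq_mul, add_zero, zero_add, smul_smul, hPdot, hTdot, dotProduct_zero]
      field_simp
      ring
    rw [heq]; exact h0
  -- continuity helpers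
  have hxc : Continuous x := hdx.continuous
  have hmvc : ∀ {k : ℕ} (M : Matrix (Fin k) (Fin n) ℝ) (f : ℝ → Fin n → ℝ), Continuous f →
      Continuous (fun t => M.mulVec (f t)) := by
    intro k M f hf
    refine continuous_pi fun i => ?_
    show Continuous fun t => ∑ j, M i j * f t j
    exact continuous_finset_sum _ fun j _ => continuous_const.mul ((continuous_apply j).comp hf)
  have hdotc : ∀ {k : ℕ} (f h : ℝ → Fin k → ℝ), Continuous f → Continuous h →
      Continuous (fun t => f t ⬝ᵥ h t) := by
    intro k f h hf hh
    show Continuous fun t => ∑ i, f t i * h t i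
    exact continuous_finset_sum _ fun i _ =>
      ((continuous_apply i).comp hf).mul ((continuous_apply i).comp hh)
  -- the storage function and its derivative
  set g : ℝ → ℝ := fun t => deriv x t ⬝ᵥ P.mulVec (x t) + x t ⬝ᵥ P.mulVec (deriv x t) with hg
  have hVd : ∀ t, HasDerivAt (fun s => x s ⬝ᵥ P.mulVec (x s)) (g t) t := by
    intro t
    have hx' : ∀ i, HasDerivAt (fun s => x s i) (deriv x t i) t :=
      fun i => hasDerivAt_pi.1 (hdx t).hasDerivAt i
    have h : HasDerivAt (fun s => ∑ i, x s i * ∑ j, P i j * x s j)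
        (∑ i, (deriv x t i * ∑ j, P i j * x t j + x t i * ∑ j, P i j * deriv x t j)) t := by
      refine HasDerivAt.fun_sum fun i _ => ?_
      exact (hx' i).mul (HasDerivAt.fun_sum fun j _ => (hx' j).const_mul (P i j))
    convert h using 1 <;>
    simp [hg, dotProduct, Matrix.mulVec, Finset.sum_add_distrib]
  have hgc : Continuous g :=
    (hdotc _ _ hcx (hmvc P x hxc)).add (hdotc _ _ hxc (hmvc P (deriv x) hcx))
  have hgint : IntervalIntegrable g MeasureTheory.volume 0 T := hgc.intervalIntegrable 0 T
  have hftc : ∫ t in (0:ℝ)..T, g t = x T ⬝ᵥ P.mulVec (x T) := by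
    rw [intervalIntegral.integral_eq_sub_of_hasDerivAt (fun t _ => hVd t) hgint]
    simp [hx0]
  have hVT : 0 ≤ x T ⬝ᵥ P.mulVec (x T) := by simpa using hP.posSemidef.dotProduct_mulVec_nonneg (x T)
  -- pointwise dissipation bound
  have hbound : ∀ t, g t ≤ γ * (d t ⬝ᵥ d t) - γ⁻¹ * (C.mulVec (x t) ⬝ᵥ C.mulVec (x t)) := by
    intro t
    have h := key (x t) (d t)
    rw [← hode t] at h
    simp only [hg]
    linarith
  have hCc : Continuous fun t => C.mulVec (x t) ⬝ᵥ C.mulVec (x t) :=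
    hdotc _ _ (hmvc C x hxc) (hmvc C x hxc)
  have hdc : Continuous fun t => d t ⬝ᵥ d t := hdotc _ _ hcd hcd
  have hCint : IntervalIntegrable (fun t => C.mulVec (x t) ⬝ᵥ C.mulVec (x t))
      MeasureTheory.volume 0 T := hCc.intervalIntegrable 0 T
  have hdint : IntervalIntegrable (fun t => d t ⬝ᵥ d t) MeasureTheory.volume 0 T :=
    hdc.intervalIntegrable 0 T
  have hmono : ∫ t in (0:ℝ)..T, g t ≤
      ∫ t in (0:ℝ)..T, (γ * (d t ⬝ᵥ d t) - γ⁻¹ * (C.mulVec (x t) ⬝ᵥ C.mulVec (x t))) := by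
    refine intervalIntegral.integral_mono_on hT hgint ?_ fun t _ => hbound t
    exact ((continuous_const.mul hdc).sub (continuous_const.mul hCc)).intervalIntegrable 0 T
  have hsplit : ∫ t in (0:ℝ)..T, (γ * (d t ⬝ᵥ d t) - γ⁻¹ * (C.mulVec (x t) ⬝ᵥ C.mulVec (x t)))
      = γ * (∫ t in (0:ℝ)..T, d t ⬝ᵥ d t)
        - γ⁻¹ * ∫ t in (0:ℝ)..T, C.mulVec (x t) ⬝ᵥ C.mulVec (x t) := by
    rw [intervalIntegral.integral_sub (hdint.const_mul γ) (hCint.const_mul γ⁻¹),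
      intervalIntegral.integral_const_mul, intervalIntegral.integral_const_mul]
  have hineq : γ⁻¹ * (∫ t in (0:ℝ)..T, C.mulVec (x t) ⬝ᵥ C.mulVec (x t))
      ≤ γ * ∫ t in (0:ℝ)..T, d t ⬝ᵥ d t := by
    rw [hsplit, hftc] at hmono
    linarith
  have hfinal : (∫ t in (0:ℝ)..T, C.mulVec (x t) ⬝ᵥ C.mulVec (x t))
      ≤ γ ^ 2 * ∫ t in (0:ℝ)..T, d t ⬝ᵥ d t := by
    have h2 := mul_le_mul_of_nonneg_left hineq hγ.le
    rw [← mul_assoc, ← mul_assoc, mul_inv_cancel₀ hγ.ne', one_mul] at h2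
    calc (∫ t in (0:ℝ)..T, C.mulVec (x t) ⬝ᵥ C.mulVec (x t))
        ≤ γ * γ * ∫ t in (0:ℝ)..T, d t ⬝ᵥ d t := h2
      _ = γ ^ 2 * ∫ t in (0:ℝ)..T, d t ⬝ᵥ d t := by ring
  have hCrw : (fun t => ∑ i, (C.mulVec (x t)) i ^ 2)
      = fun t => C.mulVec (x t) ⬝ᵥ C.mulVec (x t) := by
    funext t; simp [dotProduct, pow_two]
  have hdrw : (fun t => ∑ i, (d t) i ^ 2) = fun t => d t ⬝ᵥ d t := by
    funext t; simp [dotProduct, pow_two]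
  rw [hCrw, hdrw]
  exact hfinal
end
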